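/- arXiv:2409.14375 — 2 statements merged into one kernel-verified Lean document; each statement's English description precedes it below -/
import Mathlib

section
/- Let N ∈ ℕ, let d be a positive divisor of N and let a be an integer with 0 ≤ a < N/d, and let L = ℤ·(d,0) + ℤ·(a, N/d) ⊆ ℤ². Then there exist integers A, B with gcd(A,B,N) = 1 and L = {(x,y) ∈ ℤ² : Ax + By ≡ 0 (mod N)} if and only if gcd(a, d, N/d) = 1. Equivalently, the index-N sublattices of ℤ² that are NOT preimages of solution sets of a linear congruence Ax + By ≡ 0 (mod N) with gcd(A,B,N) = 1 are exactly those of the form ℤ·(d,0) + ℤ·(a, N/d) with d | N, 0 ≤ a < N/d and gcd(a, d, N/d) > 1. -/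
/-- If `gcd (gcd a d) e = 1` then some `a + k*d` is coprime to `e`. -/
lemma exists_coprime_add_mul (a d e : ℕ) (he : e ≠ 0)
    (h : Nat.Coprime (Nat.gcd a d) e) : ∃ k : ℕ, Nat.Coprime (a + k * d) e := by
  classical
  let ps := e.primeFactors.filter (fun p ↦ ¬p ∣ a)
  refine ⟨ps.prod id, Nat.Coprime.symm ?_⟩
  apply Nat.coprime_of_dvd
  intro p pp hpe hpsum
  by_cases hpa : p ∣ a
  · have hpd : ¬ p ∣ d := by
      intro hpd
      have : p ∣ Nat.gcd (Nat.gcd a d) e := Nat.dvd_gcd (Nat.dvd_gcd hpa hpd) hpe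
      rw [h] at this
      exact pp.one_lt.ne' (Nat.dvd_one.mp this)
    have hkd : p ∣ ps.prod id * d := by
      have := Nat.dvd_sub hpsum hpa
      rwa [Nat.add_sub_cancel_left] at this
    rcases pp.dvd_mul.mp hkd with hk | hk
    · obtain ⟨q, hq, hq'⟩ := (pp.prime.dvd_finset_prod_iff id).mp hk
      obtain ⟨hq1, hq2⟩ := Finset.mem_filter.mp hq
      have hpq : p = q := (Nat.prime_dvd_prime_iff_eq pp
        (Nat.prime_of_mem_primeFactors hq1)).mp hq'
      exact hq2 (hpq ▸ hpa)
    · exact hpd hk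
  · have pps : p ∈ ps := Finset.mem_filter.mpr ⟨Nat.mem_primeFactors.mpr ⟨pp, hpe, he⟩, hpa⟩
    have hk : p ∣ ps.prod id * d := ((Finset.dvd_prod_of_mem id pps).mul_right d)
    have := Nat.dvd_sub hpsum hk
    rw [Nat.add_sub_cancel] at this
    exact hpa this

/-- For `d ∣ N`, `0 ≤ a < N/d`, the index-`N` sublattice
`L = ℤ·(d,0) + ℤ·(a, N/d)` of `ℤ²` is the preimage of the solution set of a congruence
`Ax + By ≡ 0 (mod N)` with `gcd(A,B,N) = 1` iff `gcd(a, d, N/d) = 1`. -/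
theorem sublattice_is_congruence_solution_set_iff (N d : ℕ) (hN : 0 < N)
    (hd : d ∣ N) (hd0 : 0 < d) (a : ℕ) (ha : a < N / d) :
    (∃ A B : ℤ, Int.gcd (Int.gcd A B) N = 1 ∧
        ((AddSubgroup.closure {((d : ℤ), (0 : ℤ)), ((a : ℤ), ((N / d : ℕ) : ℤ))} :
            AddSubgroup (ℤ × ℤ)) : Set (ℤ × ℤ)) =
          {p : ℤ × ℤ | (A : ZMod N) * (p.1 : ZMod N) + (B : ZMod N) * (p.2 : ZMod N) = 0}) ↔
      Nat.gcd (Nat.gcd a d) (N / d) = 1 := by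
  set e := N / d with he
  have hNde : N = d * e := (Nat.mul_div_cancel' hd).symm
  have he0 : 0 < e := lt_of_le_of_lt (Nat.zero_le a) ha
  have hNZ : (N : ℤ) = (d : ℤ) * (e : ℤ) := by exact_mod_cast hNde
  have key : ∀ (A B x y : ℤ),
      ((A : ZMod N) * (x : ZMod N) + (B : ZMod N) * (y : ZMod N) = 0) ↔
        (N : ℤ) ∣ A * x + B * y := by
    intro A B x y
    rw [← ZMod.intCast_zmod_eq_zero_iff_dvd]
    push_cast
    rfl
  constructor
  · rintro ⟨A, B, hg, hset⟩
    have mem1 : ((d : ℤ), (0 : ℤ)) ∈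
        ((AddSubgroup.closure {((d : ℤ), (0 : ℤ)), ((a : ℤ), ((e : ℕ) : ℤ))} :
          AddSubgroup (ℤ × ℤ)) : Set (ℤ × ℤ)) :=
      AddSubgroup.subset_closure (Set.mem_insert _ _)
    have mem2 : (((a : ℕ) : ℤ), ((e : ℕ) : ℤ)) ∈
        ((AddSubgroup.closure {((d : ℤ), (0 : ℤ)), ((a : ℤ), ((e : ℕ) : ℤ))} :
          AddSubgroup (ℤ × ℤ)) : Set (ℤ × ℤ)) :=
      AddSubgroup.subset_closure (Set.mem_insert_of_mem _ rfl)
    rw [hset] at mem1 mem2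
    simp only [Set.mem_setOf_eq] at mem1 mem2
    rw [key] at mem1 mem2
    -- from mem1: e ∣ A
    have heA : (e : ℤ) ∣ A := by
      rcases mem1 with ⟨c, hc⟩
      refine ⟨c, ?_⟩
      rw [hNZ] at hc
      have hd0' : (d : ℤ) ≠ 0 := by exact_mod_cast hd0.ne'
      apply mul_left_cancel₀ hd0'
      nlinarith [hc]
    obtain ⟨A', hA'⟩ := heA
    -- from mem2: d ∣ A' * a + B
    have hdAB : (d : ℤ) ∣ A' * a + B := by
      rcases mem2 with ⟨c, hc⟩
      refine ⟨c, ?_⟩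
      rw [hNZ, hA'] at hc
      have he0' : (e : ℤ) ≠ 0 := by exact_mod_cast he0.ne'
      have : (e : ℤ) * (A' * a + B) = (e : ℤ) * ((d : ℤ) * c) := by ring_nf; ring_nf at hc; linarith
      exact mul_left_cancel₀ he0' this
    set g := Nat.gcd (Nat.gcd a d) e with hgdef
    have hga : (g : ℤ) ∣ (a : ℤ) := Int.natCast_dvd_natCast.mpr ((Nat.gcd_dvd_left _ _).trans (Nat.gcd_dvd_left a d))
    have hgd : (g : ℤ) ∣ (d : ℤ) := Int.natCast_dvd_natCast.mpr ((Nat.gcd_dvd_left _ _).trans (Nat.gcd_dvd_right a d))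
    have hge : (g : ℤ) ∣ (e : ℤ) := Int.natCast_dvd_natCast.mpr (Nat.gcd_dvd_right _ _)
    have hgA : (g : ℤ) ∣ A := hA' ▸ hge.mul_right A'
    have hgB : (g : ℤ) ∣ B := by
      have h1 : (g : ℤ) ∣ A' * a + B := hgd.trans hdAB
      have h2 : (g : ℤ) ∣ A' * a := Dvd.dvd.mul_left hga A'
      simpa using dvd_sub h1 h2
    have hgN : (g : ℤ) ∣ (N : ℤ) := hNZ ▸ hgd.mul_right _
    have : (g : ℤ) ∣ ((Int.gcd (Int.gcd A B) N : ℕ) : ℤ) :=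
      Int.dvd_coe_gcd (Int.dvd_coe_gcd hgA hgB) hgN
    rw [hg] at this
    exact Nat.dvd_one.mp (by exact_mod_cast this)
  · intro h
    obtain ⟨k, hk⟩ := exists_coprime_add_mul a d e he0.ne' h
    refine ⟨(e : ℤ), -((a + k * d : ℕ) : ℤ), ?_, ?_⟩
    · have h1 : Int.gcd (e : ℤ) (-((a + k * d : ℕ) : ℤ)) = Nat.gcd e (a + k * d) := by
        simp only [Int.gcd, Int.natAbs_neg, Int.natAbs_natCast]
      rw [h1]
      have h2 : Nat.gcd e (a + k * d) = 1 := Nat.coprime_comm.mp hk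
      rw [h2]
      simp
    · ext ⟨x, y⟩
      simp only [SetLike.mem_coe, AddSubgroup.mem_closure_pair, Set.mem_setOf_eq,
        Prod.smul_mk, smul_eq_mul, Prod.mk_add_mk, Prod.mk.injEq, mul_zero, add_zero]
      rw [key]
      constructor
      · rintro ⟨m, n, hx, hy⟩
        refine ⟨m - k * n, ?_⟩
        rw [hNZ, ← hx, ← hy]
        push_cast
        ring
      · rintro ⟨c, hc⟩
        have hcop : IsCoprime ((e : ℕ) : ℤ) (-((a + k * d : ℕ) : ℤ)) :=
          (Nat.isCoprime_iff_coprime.mpr (Nat.coprime_comm.mp hk)).neg_right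
        have hey : (e : ℤ) ∣ y := by
          apply hcop.dvd_of_dvd_mul_left
          have h1 : (e : ℤ) ∣ (e : ℤ) * x + -((a + k * d : ℕ) : ℤ) * y :=
            ⟨d * c, by rw [hc, hNZ]; ring⟩
          have := dvd_sub h1 (Dvd.intro x rfl)
          simpa [mul_comm] using this
        obtain ⟨n, rfl⟩ := hey
        have hdx : (d : ℤ) ∣ x - ((a : ℤ) + (k : ℤ) * d) * n := by
          have he0' : (e : ℤ) ≠ 0 := by exact_mod_cast he0.ne'
          refine ⟨c, mul_left_cancel₀ he0' ?_⟩
          rw [hNZ] at hc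
          push_cast at hc ⊢
          ring_nf
          ring_nf at hc
          linarith
        obtain ⟨m', hm'⟩ := hdx
        refine ⟨m' + k * n, n, ?_, by ring⟩
        have : x = (d : ℤ) * m' + ((a : ℤ) + (k : ℤ) * d) * n := by linarith [hm']
        rw [this]; ring
end

section
/- Let N ∈ ℕ and let L be a subgroup of ℤ² of index N. Then the quotient group ℤ²/L is cyclic (equivalently, ℤ²/L ≅ ℤ/Nℤ) if and only if there exist integers A, B with gcd(A,B,N) = 1 such that L = {(x,y) ∈ ℤ² : Ax + By ≡ 0 (mod N)}. That is, for n = 2 and j = 1, π_N^{−1}(H_{N,1}(2)) = L_{N,1}(2) for every integer modulus N. -/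
/-- The additive homomorphism `(x, y) ↦ A x + B y` from `ℤ²` to `ℤ/Nℤ`. -/
private def congruenceHom (N : ℕ) (A B : ℤ) : (ℤ × ℤ) →+ ZMod N :=
  AddMonoidHom.mk' (fun p => (A : ZMod N) * (p.1 : ZMod N) + (B : ZMod N) * (p.2 : ZMod N))
    (by intro p q; simp [Prod.fst_add, Prod.snd_add]; ring)

private lemma congruenceHom_apply (N : ℕ) (A B : ℤ) (p : ℤ × ℤ) :
    congruenceHom N A B p = (A : ZMod N) * (p.1 : ZMod N) + (B : ZMod N) * (p.2 : ZMod N) := rfl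

/-- For a subgroup `L ≤ ℤ²` of index `N`, the quotient `ℤ²/L` is cyclic
(equivalently `ℤ²/L ≅ ℤ/Nℤ`) iff `L` is the preimage of the solution set of a congruence
`Ax + By ≡ 0 (mod N)` with `gcd(A,B,N) = 1`; i.e. `π_N^{−1}(H_{N,1}(2)) = L_{N,1}(2)`. -/
theorem quotient_cyclic_iff_congruence_solution_set (N : ℕ) (hN : 0 < N)
    (L : AddSubgroup (ℤ × ℤ)) (hL : L.index = N) :
    Nonempty ((ℤ × ℤ) ⧸ L ≃+ ZMod N) ↔
      ∃ A B : ℤ, Int.gcd (Int.gcd A B) N = 1 ∧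
        (L : Set (ℤ × ℤ)) =
          {p : ℤ × ℤ | (A : ZMod N) * (p.1 : ZMod N) + (B : ZMod N) * (p.2 : ZMod N) = 0} := by
  haveI : NeZero N := ⟨hN.ne'⟩
  constructor
  · rintro ⟨ψ⟩
    set f : (ℤ × ℤ) →+ ZMod N := ψ.toAddMonoidHom.comp (QuotientAddGroup.mk' L) with hf
    have hker : ∀ p : ℤ × ℤ, f p = 0 ↔ p ∈ L := by
      intro p
      simp [hf, AddMonoidHom.comp_apply, AddEquiv.map_eq_zero_iff,
        QuotientAddGroup.eq_zero_iff]
    set A : ℤ := ((f (1, 0)).val : ℤ) with hAdef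
    set B : ℤ := ((f (0, 1)).val : ℤ) with hBdef
    have hA : (A : ZMod N) = f (1, 0) := by
      simp [hAdef, ZMod.natCast_val, ZMod.cast_id]
    have hB : (B : ZMod N) = f (0, 1) := by
      simp [hBdef, ZMod.natCast_val, ZMod.cast_id]
    have hval : ∀ p : ℤ × ℤ, f p = (A : ZMod N) * (p.1 : ZMod N) + (B : ZMod N) * (p.2 : ZMod N) := by
      rintro ⟨x, y⟩
      have hp : ((x, y) : ℤ × ℤ) = x • ((1 : ℤ), (0 : ℤ)) + y • ((0 : ℤ), (1 : ℤ)) := by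
        simp [Prod.ext_iff]
      rw [hp, map_add, map_zsmul, map_zsmul, ← hA, ← hB, zsmul_eq_mul, zsmul_eq_mul]
      simp only [Prod.smul_fst, Prod.smul_snd, Prod.fst_add, Prod.snd_add, smul_eq_mul]
      push_cast
      ring
    have hsurj : Function.Surjective f := by
      intro z
      obtain ⟨q, hq⟩ := QuotientAddGroup.mk'_surjective L (ψ.symm z)
      refine ⟨q, ?_⟩
      rw [hf, AddMonoidHom.comp_apply, hq]
      simp
    refine ⟨A, B, ?_, ?_⟩
    · obtain ⟨⟨x, y⟩, hp1⟩ := hsurj 1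
      rw [hval] at hp1
      have h2 : ((A * x + B * y - 1 : ℤ) : ZMod N) = 0 := by
        push_cast
        linear_combination hp1
      have hdvd : (N : ℤ) ∣ A * x + B * y - 1 :=
        (ZMod.intCast_zmod_eq_zero_iff_dvd _ _).mp h2
      set g : ℕ := Int.gcd (Int.gcd A B) N with hg
      have hgA : (g : ℤ) ∣ A :=
        dvd_trans (Int.gcd_dvd_left _ _) (Int.gcd_dvd_left _ _)
      have hgB : (g : ℤ) ∣ B :=
        dvd_trans (Int.gcd_dvd_left _ _) (Int.gcd_dvd_right _ _)
      have hgN : (g : ℤ) ∣ (N : ℤ) := Int.gcd_dvd_right _ _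
      have hone : (g : ℤ) ∣ 1 := by
        have h3 : (g : ℤ) ∣ A * x + B * y := dvd_add (hgA.mul_right x) (hgB.mul_right y)
        have h4 : (g : ℤ) ∣ A * x + B * y - 1 := hgN.trans hdvd
        have := dvd_sub h3 h4
        simpa using this
      exact Nat.dvd_one.mp (Int.ofNat_dvd.mp (by simpa using hone))
    · ext p
      simp only [SetLike.mem_coe, Set.mem_setOf_eq]
      rw [← hker p, hval p]
  · rintro ⟨A, B, hgcd, hset⟩
    have hLker : L = (congruenceHom N A B).ker := by
      ext p
      have hmem : p ∈ L ↔ p ∈ (L : Set (ℤ × ℤ)) := Iff.rfl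
      rw [hmem, hset]
      simp [AddMonoidHom.mem_ker, congruenceHom_apply, Set.mem_setOf_eq]
    -- Bezout for three integers
    have e1 := Int.gcd_eq_gcd_ab A B
    have e2 := Int.gcd_eq_gcd_ab ((Int.gcd A B : ℕ) : ℤ) (N : ℤ)
    rw [hgcd] at e2
    set α := Int.gcdA A B
    set β := Int.gcdB A B
    set γ := Int.gcdA ((Int.gcd A B : ℕ) : ℤ) (N : ℤ)
    set δ := Int.gcdB ((Int.gcd A B : ℕ) : ℤ) (N : ℤ)
    have key : A * (α * γ) + B * (β * γ) + (N : ℤ) * δ = 1 := by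
      push_cast at e2
      linear_combination (-γ) * e1 - e2
    have hone : (A : ZMod N) * ((α : ZMod N) * (γ : ZMod N)) +
        (B : ZMod N) * ((β : ZMod N) * (γ : ZMod N)) = 1 := by
      have := congrArg (fun z : ℤ => (z : ZMod N)) key
      push_cast at this
      simpa [ZMod.natCast_self] using this
    have hsurj : Function.Surjective (congruenceHom N A B) := by
      intro z
      obtain ⟨m, hm⟩ := ZMod.intCast_surjective (n := N) z
      refine ⟨(m * (α * γ), m * (β * γ)), ?_⟩
      rw [congruenceHom_apply]
      push_cast
      rw [← hm]
      linear_combination ((m : ZMod N)) * hone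
    rw [hLker]
    exact ⟨QuotientAddGroup.quotientKerEquivOfSurjective _ hsurj⟩
end
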